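/- Let J be a nilpotent Jordan superalgebra over ℂ of type (4,1), i.e. dim J₀ = 4 and dim J₁ = 1. Then J₀·J₁ = 0 and J₁·J₁ = 0; in particular the multiplication of J is completely determined by the multiplication of the 4-dimensional nilpotent Jordan algebra J₀. -/
import Mathlib


noncomputable section

/-- The underlying ℤ/2-graded vector space of type `(m,n)`: even part `Fin m → ℂ`,
odd part `Fin n → ℂ`. -/
abbrev GV (m n : ℕ) : Type := (Fin m → ℂ) × (Fin n → ℂ)

/-- A superalgebra structure tensor of type `(m,n)`: structure constants
`c i j k` (even·even), `ρ i j k` (even·odd) and `Γ i j k` (odd·odd). -/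
abbrev Tensor (m n : ℕ) : Type :=
  (Fin m → Fin m → Fin m → ℂ) × (Fin m → Fin n → Fin n → ℂ) × (Fin n → Fin n → Fin m → ℂ)

/-- The ℤ/2-graded multiplication on `GV m n` determined by a structure tensor. -/
def mulOf {m n : ℕ} (μ : Tensor m n) (x y : GV m n) : GV m n :=
  (fun k => (∑ i, ∑ j, x.1 i * y.1 j * μ.1 i j k) + ∑ i, ∑ j, x.2 i * y.2 j * μ.2.2 i j k,
   fun k => (∑ i, ∑ j, x.1 i * y.2 j * μ.2.1 i j k) + ∑ i, ∑ j, y.1 i * x.2 j * μ.2.1 i j k)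

/-- `x` is homogeneous of parity `p` (`p = 0`: even, `p = 1`: odd). -/
def IsHom {m n : ℕ} (p : ℕ) (x : GV m n) : Prop :=
  (p = 0 ∧ x.2 = 0) ∨ (p = 1 ∧ x.1 = 0)

/-- The sign `(-1)^k`. -/
def sgn (k : ℕ) : ℂ := (-1 : ℂ) ^ k

/-- The super-Jordan expression `J^s(w; x, y, z)` for homogeneous elements of
parities `pw, px, py, pz`. -/
def superJ {m n : ℕ} (μ : Tensor m n) (pw px py pz : ℕ) (w x y z : GV m n) : GV m n :=
  mulOf μ (mulOf μ w x) (mulOf μ y z)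
    + sgn (px * py) • mulOf μ (mulOf μ w y) (mulOf μ x z)
    + sgn ((px + py) * pz) • mulOf μ (mulOf μ w z) (mulOf μ x y)
    - sgn (pw * px) • mulOf μ x (mulOf μ w (mulOf μ y z))
    - sgn (py * (pw + px)) • mulOf μ y (mulOf μ w (mulOf μ x z))
    - sgn (pz * (pw + px + py)) • mulOf μ z (mulOf μ w (mulOf μ x y))

/-- `μ` is a Jordan superalgebra structure: supercommutativity and the Jordan
superidentity hold for all homogeneous elements. -/
def IsJordanSuper {m n : ℕ} (μ : Tensor m n) : Prop :=
  (∀ (px py : ℕ) (x y : GV m n), IsHom px x → IsHom py y →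
      mulOf μ x y = sgn (px * py) • mulOf μ y x) ∧
  (∀ (pw px py pz : ℕ) (w x y z : GV m n),
      IsHom pw w → IsHom px x → IsHom py y → IsHom pz z →
      superJ μ pw px py pz w x y z = 0)

/-- The product of two graded subspaces: the span of all products. -/
def mulSub {m n : ℕ} (μ : Tensor m n) (A B : Submodule ℂ (GV m n)) : Submodule ℂ (GV m n) :=
  Submodule.span ℂ {z | ∃ a ∈ A, ∃ b ∈ B, z = mulOf μ a b}

/-- The powers `J^k`: `J^1 = J` and `J^{k+1} = Σ_{i=1}^{k} J^i · J^{k+1-i}`. -/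
def powT {m n : ℕ} (μ : Tensor m n) : ℕ → Submodule ℂ (GV m n)
  | 0 => ⊤
  | 1 => ⊤
  | (k + 2) => ⨆ i : Fin (k + 1), mulSub μ (powT μ ((i : ℕ) + 1)) (powT μ (k + 1 - (i : ℕ)))
  decreasing_by
  · have := i.isLt; omega
  · omega

/-- `μ` is nilpotent: some power vanishes. -/
def IsNilpotentT {m n : ℕ} (μ : Tensor m n) : Prop :=
  ∃ k : ℕ, 1 ≤ k ∧ powT μ k = ⊥

/-- A grading-preserving algebra isomorphism between the superalgebras determined
by `μ` and `μ'`. -/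
def Iso {m n : ℕ} (μ μ' : Tensor m n) : Prop :=
  ∃ (T : (Fin m → ℂ) ≃ₗ[ℂ] (Fin m → ℂ)) (S : (Fin n → ℂ) ≃ₗ[ℂ] (Fin n → ℂ)),
    ∀ x y : GV m n,
      (T ((mulOf μ x y).1), S ((mulOf μ x y).2)) = mulOf μ' (T x.1, S x.2) (T y.1, S y.2)

/-- `μ` degenerates to `μ'`: `μ'` lies in the closure of the orbit of `μ` under
base change (in the standard topology). -/
def degenerates {m n : ℕ} (μ μ' : Tensor m n) : Prop :=
  μ' ∈ closure {ν : Tensor m n | Iso μ ν}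

/-- Standard even basis vector `e_i`. -/
def eps {m n : ℕ} (i : Fin m) : GV m n := (Pi.single i 1, 0)

/-- Standard odd basis vector `f_j`. -/
def ph {m n : ℕ} (j : Fin n) : GV m n := (0, Pi.single j 1)



lemma hGammaL (μ : Tensor 4 1) (hJ : IsJordanSuper μ) (k : Fin 4) : μ.2.2 0 0 k = 0 := by
  have h := hJ.1 1 1 (ph 0) (ph 0) (Or.inr ⟨rfl, rfl⟩) (Or.inr ⟨rfl, rfl⟩)
  have h1 := congrArg (fun z : GV 4 1 => z.1 k) h
  simp [mulOf, ph, sgn, Fin.sum_univ_one] at h1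
  linear_combination h1 / 2

lemma phMem (μ : Tensor 4 1) (i : Fin 4) (hri : μ.2.1 i 0 0 ≠ 0) (k : ℕ) :
    ph 0 ∈ powT μ k := by
  induction k using Nat.strong_induction_on with
  | _ k IH =>
    match k with
    | 0 => simp [powT]
    | 1 => simp [powT]
    | (k+2) =>
      rw [powT]
      refine le_iSup (fun i : Fin (k+1) => mulSub μ (powT μ ((i:ℕ)+1)) (powT μ (k + 1 - (i:ℕ)))) ⟨0, by omega⟩ ?_
      have hmem : (ph 0 : GV 4 1) ∈ {z | ∃ a ∈ powT μ (0+1), ∃ b ∈ powT μ (k+1-0), z = mulOf μ a b} := by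
        refine ⟨(((μ.2.1 i 0 0)⁻¹ • (Pi.single i 1 : Fin 4 → ℂ)), 0), by simp [powT], ph 0, IH (k+1) (by omega), ?_⟩
        refine Prod.ext ?_ ?_
        · funext k'
          simp [mulOf, ph]
        · funext k'
          simp [mulOf, ph, Pi.single_apply, Finset.mul_sum, Fin.sum_univ_one]
          fin_cases k'
          simp [inv_mul_cancel₀ hri]
      exact Submodule.subset_span hmem

lemma hRhoL (μ : Tensor 4 1) (hN : IsNilpotentT μ) (i : Fin 4) : μ.2.1 i 0 0 = 0 := by
  by_contra hri
  obtain ⟨k, -, hk⟩ := hN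
  have := phMem μ i hri k
  rw [hk] at this
  have h0 := congrArg (fun z : GV 4 1 => z.2 0) (Submodule.mem_bot ℂ |>.mp this)
  simp [ph] at h0

/-- For a nilpotent Jordan superalgebra of type (4,1), the even·odd and
odd·odd products vanish, so the multiplication is determined by that of the even part. -/
theorem stmt0 (μ : Tensor 4 1) (hJ : IsJordanSuper μ) (hN : IsNilpotentT μ) :
    (∀ (a : Fin 4 → ℂ) (u : Fin 1 → ℂ), mulOf μ (a, 0) (0, u) = 0) ∧
    (∀ u v : Fin 1 → ℂ, mulOf μ (0, u) (0, v) = 0) ∧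
    (∀ x y : GV 4 1, mulOf μ x y = ((mulOf μ (x.1, 0) (y.1, 0)).1, 0)) := by
  have hG := hGammaL μ hJ
  have hR := hRhoL μ hN
  have key : ∀ (i : Fin 4) (j k : Fin 1), μ.2.1 i j k = 0 := fun i j k => by
    rw [Subsingleton.elim j 0, Subsingleton.elim k 0]; exact hR i
  have keyG : ∀ (i j : Fin 1) (k : Fin 4), μ.2.2 i j k = 0 := fun i j k => by
    rw [Subsingleton.elim i 0, Subsingleton.elim j 0]; exact hG k
  refine ⟨?_, ?_, ?_⟩
  · intro a u
    refine Prod.ext (funext fun k => ?_) (funext fun k => ?_) <;>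
      simp [mulOf, key, keyG]
  · intro u v
    refine Prod.ext (funext fun k => ?_) (funext fun k => ?_) <;>
      simp [mulOf, key, keyG]
  · intro x y
    refine Prod.ext (funext fun k => ?_) (funext fun k => ?_) <;>
      simp [mulOf, key, keyG]

end
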